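/- Let $V_1, V_2, V_3$ be subspaces of a finite-dimensional vector space $V$. Then $V_1 \cap (V_2 + V_3) = V_1 \cap V_2 + V_1 \cap V_3$ holds if and only if the inclusion-exclusion formula $\dim(V_1 + V_2 + V_3) = \dim V_1 + \dim V_2 + \dim V_3 - \dim(V_1 \cap V_2) - \dim(V_1 \cap V_3) - \dim(V_2 \cap V_3) + \dim(V_1 \cap V_2 \cap V_3)$ holds. -/
import Mathlib


open Module

/-- `V₁ ⊓ (V₂ ⊔ V₃) = V₁ ⊓ V₂ ⊔ V₁ ⊓ V₃` holds iff the inclusion-exclusion formula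
for dimensions holds (stated additively to avoid natural subtraction). -/
theorem stmt1 (k : Type*) [Field k] (V : Type*) [AddCommGroup V] [Module k V]
    [FiniteDimensional k V] (V₁ V₂ V₃ : Submodule k V) :
    V₁ ⊓ (V₂ ⊔ V₃) = V₁ ⊓ V₂ ⊔ V₁ ⊓ V₃ ↔
      finrank k ↥(V₁ ⊔ V₂ ⊔ V₃) + finrank k ↥(V₁ ⊓ V₂) + finrank k ↥(V₁ ⊓ V₃)
          + finrank k ↥(V₂ ⊓ V₃)
        = finrank k ↥V₁ + finrank k ↥V₂ + finrank k ↥V₃ + finrank k ↥(V₁ ⊓ V₂ ⊓ V₃) := by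
  have hle : V₁ ⊓ V₂ ⊔ V₁ ⊓ V₃ ≤ V₁ ⊓ (V₂ ⊔ V₃) :=
    sup_le (inf_le_inf_left _ le_sup_left) (inf_le_inf_left _ le_sup_right)
  have h1 := Submodule.finrank_sup_add_finrank_inf_eq V₁ (V₂ ⊔ V₃)
  have h2 := Submodule.finrank_sup_add_finrank_inf_eq V₂ V₃
  have h3 := Submodule.finrank_sup_add_finrank_inf_eq (V₁ ⊓ V₂) (V₁ ⊓ V₃)
  have e1 : V₁ ⊔ V₂ ⊔ V₃ = V₁ ⊔ (V₂ ⊔ V₃) := sup_assoc ..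
  have e2 : V₁ ⊓ V₂ ⊓ (V₁ ⊓ V₃) = V₁ ⊓ V₂ ⊓ V₃ := by
    ac_rfl
  rw [e1] at *
  rw [e2] at h3
  have key : V₁ ⊓ (V₂ ⊔ V₃) = V₁ ⊓ V₂ ⊔ V₁ ⊓ V₃ ↔
      finrank k ↥(V₁ ⊓ (V₂ ⊔ V₃)) = finrank k ↥(V₁ ⊓ V₂ ⊔ V₁ ⊓ V₃) := by
    constructor
    · intro h; rw [h]
    · intro h
      exact (Submodule.eq_of_le_of_finrank_le hle h.le).symm
  rw [key]
  omega
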